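/- (BEC-bound for H_α^J.) Fix α > 0, α ≠ 1, and suppose that for every fixed y ∈ I_α^H the map x ↦ κ_α^H(x,y) is convex on I_α^H, and likewise in the second argument for every fixed first argument. Write K_i = K_α^J(X_i|Y_i) and δ = δ_α^H = 2^{1-α}. Then: if α > 1, H_α^J(X_1+X_2|Y_1Y_2) ≥ (1/(1-α))·log( (δ − K_1)(δ − K_2)/(1 − δ) + δ ); and if α < 1, H_α^J(X_1+X_2|Y_1Y_2) ≤ (1/(1-α))·log( (δ − K_1)(δ − K_2)/(1 − δ) + δ ). If instead κ_α^H is concave in each argument, the two inequalities hold with ≤ and ≥ exchanged. -/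

import Mathlib

open Real

noncomputable section

/-- Binary convolution `a∗b = a(1-b) + (1-a)b`. -/
def bconv (a b : ℝ) : ℝ := a * (1 - b) + (1 - a) * b

/-- Binary Rényi entropy `h_α(p) = (1/(1-α))·log(p^α + (1-p)^α)`. -/
def binH (α p : ℝ) : ℝ := (1 / (1 - α)) * Real.log (p ^ α + (1 - p) ^ α)

/-- Inverse of `h_α` as a map `[0, log 2] → [0, 1/2]`. -/
def binHInv (α : ℝ) : ℝ → ℝ := Function.invFunOn (binH α) (Set.Icc 0 (1/2))

/-- `k_α^A(p) = (p^α + (1-p)^α)^{1/α}`. -/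
def kA (α p : ℝ) : ℝ := (p ^ α + (1 - p) ^ α) ^ (1/α)

/-- Inverse of `k_α^A`, mapping `I_α^A` back to `[0,1/2]`. -/
def kAInv (α : ℝ) : ℝ → ℝ := Function.invFunOn (kA α) (Set.Icc 0 (1/2))

/-- `δ_α^A = 2^{(1-α)/α}`. -/
def deltaA (α : ℝ) : ℝ := (2 : ℝ) ^ ((1 - α)/α)

/-- The closed interval `I_α^A` with endpoints `1` and `δ_α^A`. -/
def IA (α : ℝ) : Set ℝ := Set.uIcc 1 (deltaA α)

/-- `κ_α^A(x,y) = k_α^A((k_α^A)⁻¹(x) ∗ (k_α^A)⁻¹(y))`. -/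
def kkA (α x y : ℝ) : ℝ := kA α (bconv (kAInv α x) (kAInv α y))

/-- `k_α^H(p) = p^α + (1-p)^α`. -/
def kH (α p : ℝ) : ℝ := p ^ α + (1 - p) ^ α

/-- Inverse of `k_α^H`, mapping `I_α^H` back to `[0,1/2]`. -/
def kHInv (α : ℝ) : ℝ → ℝ := Function.invFunOn (kH α) (Set.Icc 0 (1/2))

/-- `δ_α^H = 2^{1-α}`. -/
def deltaH (α : ℝ) : ℝ := (2 : ℝ) ^ (1 - α)

/-- The closed interval `I_α^H` with endpoints `1` and `δ_α^H`. -/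
def IH (α : ℝ) : Set ℝ := Set.uIcc 1 (deltaH α)

/-- `κ_α^H(x,y) = k_α^H((k_α^H)⁻¹(x) ∗ (k_α^H)⁻¹(y))`. -/
def kkH (α x y : ℝ) : ℝ := kH α (bconv (kHInv α x) (kHInv α y))

/-- `ĥ_α(x,y) = h_α(h_α⁻¹(x) ∗ h_α⁻¹(y))`. -/
def hhat (α x y : ℝ) : ℝ := binH α (bconv (binHInv α x) (binHInv α y))

/-- Marginal on `Y` of a joint pmf. -/
def margY {X Y : Type*} [Fintype X] (p : X → Y → ℝ) (y : Y) : ℝ := ∑ x, p x y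

/-- A joint pmf: nonnegative entries summing to one. -/
def IsPmf {X Y : Type*} [Fintype X] [Fintype Y] (p : X → Y → ℝ) : Prop :=
  (∀ x y, 0 ≤ p x y) ∧ ∑ x, ∑ y, p x y = 1

/-- Arimoto conditional Rényi entropy `H_α^A(X|Y)`. -/
def condA (α : ℝ) {X Y : Type*} [Fintype X] [Fintype Y] (p : X → Y → ℝ) : ℝ :=
  (α / (1 - α)) * Real.log (∑ y, margY p y * (∑ x, (p x y / margY p y) ^ α) ^ (1/α))

/-- Hayashi conditional Rényi entropy `H_α^H(X|Y)`. -/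
def condH (α : ℝ) {X Y : Type*} [Fintype X] [Fintype Y] (p : X → Y → ℝ) : ℝ :=
  (1 / (1 - α)) * Real.log (∑ y, ∑ x, margY p y * (p x y / margY p y) ^ α)

/-- Jizba–Arimitsu conditional Rényi entropy `H_α^J(X|Y)`. -/
def condJ (α : ℝ) {X Y : Type*} [Fintype X] [Fintype Y] (p : X → Y → ℝ) : ℝ :=
  (1 / (1 - α)) * (Real.log (∑ x, ∑ y, p x y ^ α) - Real.log (∑ y, margY p y ^ α))

/-- Cachin conditional Rényi entropy `H_α^C(X|Y)`. -/
def condC (α : ℝ) {X Y : Type*} [Fintype X] [Fintype Y] (p : X → Y → ℝ) : ℝ :=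
  (1 / (1 - α)) * ∑ y, margY p y * Real.log (∑ x, (p x y / margY p y) ^ α)

/-- `K_α^A(X|Y) = exp(((1-α)/α)·H_α^A(X|Y))`. -/
def KA (α : ℝ) {X Y : Type*} [Fintype X] [Fintype Y] (p : X → Y → ℝ) : ℝ :=
  Real.exp (((1 - α)/α) * condA α p)

/-- `K_α^H(X|Y) = exp((1-α)·H_α^H(X|Y))`. -/
def KH (α : ℝ) {X Y : Type*} [Fintype X] [Fintype Y] (p : X → Y → ℝ) : ℝ :=
  Real.exp ((1 - α) * condH α p)

/-- `K_α^J(X|Y) = exp((1-α)·H_α^J(X|Y))`. -/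
def KJ (α : ℝ) {X Y : Type*} [Fintype X] [Fintype Y] (p : X → Y → ℝ) : ℝ :=
  Real.exp ((1 - α) * condJ α p)

/-- Joint pmf of `(X₁+X₂, (Y₁,Y₂))` for independent pairs `(X₁,Y₁)`, `(X₂,Y₂)`. -/
def combine {Y1 Y2 : Type*} (p1 : Bool → Y1 → ℝ) (p2 : Bool → Y2 → ℝ) :
    Bool → Y1 × Y2 → ℝ :=
  fun z y => ∑ x : Bool, p1 x y.1 * p2 (Bool.xor x z) y.2

/-- `k_∞^A(p) = max{p, 1-p}`. -/
def kInf (p : ℝ) : ℝ := max p (1 - p)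

/-- Binary min-entropy `h_∞(p) = -log max{p, 1-p}`. -/
def binHInf (p : ℝ) : ℝ := - Real.log (max p (1 - p))

/-- Inverse of the restriction of `h_∞` to `[0,1/2]`. -/
def binHInfInv : ℝ → ℝ := Function.invFunOn binHInf (Set.Icc 0 (1/2))

/-- Conditional min-entropy `H_∞(X|Y)` for binary `X`. -/
def condInf {Y : Type*} [Fintype Y] (p : Bool → Y → ℝ) : ℝ :=
  - Real.log (∑ y, margY p y * max (p false y / margY p y) (p true y / margY p y))

/-- Unconditional Rényi entropy of a finitely supported distribution. -/
def renyiEnt (α : ℝ) {X : Type*} [Fintype X] (p : X → ℝ) : ℝ :=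
  (1 / (1 - α)) * Real.log (∑ x, p x ^ α)

/-- Distribution of the mod-2 sum of two independent binary random variables. -/
def sumDist (p1 p2 : Bool → ℝ) : Bool → ℝ := fun z => ∑ x : Bool, p1 x * p2 (Bool.xor x z)

section Aux

variable {α : ℝ}

lemma deltaH_pos : 0 < deltaH α := Real.rpow_pos_of_pos (by norm_num) _

lemma deltaH_lt_one (h : 1 < α) : deltaH α < 1 :=
  Real.rpow_lt_one_of_one_lt_of_neg (by norm_num) (by linarith)

lemma one_lt_deltaH (h : α < 1) : 1 < deltaH α := by
  have := (Real.one_lt_rpow_iff_of_pos (x := 2) (by norm_num) (y := 1 - α)).mpr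
    (Or.inl ⟨by norm_num, by linarith⟩)
  simpa [deltaH] using this

lemma deltaH_ne_one (h : α ≠ 1) : deltaH α ≠ 1 := by
  rcases lt_or_gt_of_ne h with h | h
  · exact ne_of_gt (one_lt_deltaH h)
  · exact ne_of_lt (deltaH_lt_one h)

lemma kH_zero (hα : 0 < α) : kH α 0 = 1 := by
  simp [kH, Real.zero_rpow (ne_of_gt hα)]

lemma kH_half : kH α (1/2) = deltaH α := by
  have h2 : ((1:ℝ)/2) = 2 ^ (-1 : ℝ) := by
    rw [Real.rpow_neg_one]; norm_num
  have h3 : ((1:ℝ)/2) ^ α = 2 ^ (-α) := by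
    rw [h2, ← Real.rpow_mul (by norm_num)]; norm_num
  simp only [kH, deltaH]
  norm_num
  rw [h3, ← two_mul, show (1:ℝ)-α = 1 + (-α) by ring,
    Real.rpow_add (by norm_num), Real.rpow_one]

lemma kH_symm (a : ℝ) : kH α (1 - a) = kH α a := by
  simp only [kH]; ring_nf

end Aux
section Aux2

variable {α : ℝ}

lemma kH_hasDerivAt (hx : x ∈ Set.Ioo (0:ℝ) (1/2)) :
    HasDerivAt (kH α) (α * x ^ (α - 1) - α * (1 - x) ^ (α - 1)) x := by
  have h1 : HasDerivAt (fun p : ℝ => p ^ α) (α * x ^ (α - 1)) x :=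
    Real.hasDerivAt_rpow_const (Or.inl (ne_of_gt hx.1))
  have h2 : HasDerivAt (fun p : ℝ => (1 - p) ^ α) (α * (1 - x) ^ (α - 1) * (-1)) x := by
    have hb : HasDerivAt (fun p : ℝ => 1 - p) (-1) x := by
      simpa using (hasDerivAt_id x).const_sub 1
    exact (Real.hasDerivAt_rpow_const (x := 1 - x) (p := α)
      (Or.inl (by nlinarith [hx.2]))).comp x hb
  exact (h1.add h2).congr_deriv (by ring)

lemma kH_continuousOn (hα : 0 < α) : ContinuousOn (kH α) (Set.Icc 0 (1/2)) := by
  apply ContinuousOn.add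
  · exact (Real.continuous_rpow_const (le_of_lt hα)).continuousOn
  · exact ((Real.continuous_rpow_const (le_of_lt hα)).comp
      (continuous_const.sub continuous_id)).continuousOn

lemma kH_strictMonoOn (hα : 0 < α) (h1 : α < 1) :
    StrictMonoOn (kH α) (Set.Icc 0 (1/2)) := by
  apply strictMonoOn_of_deriv_pos (convex_Icc _ _) (kH_continuousOn hα)
  intro x hx
  rw [interior_Icc] at hx
  rw [(kH_hasDerivAt hx).deriv]
  have hlt : (1 - x) ^ (α - 1) < x ^ (α - 1) :=
    Real.rpow_lt_rpow_of_neg hx.1 (by linarith [hx.2]) (by linarith)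
  nlinarith

lemma kH_strictAntiOn (h1 : 1 < α) :
    StrictAntiOn (kH α) (Set.Icc 0 (1/2)) := by
  apply strictAntiOn_of_deriv_neg (convex_Icc _ _) (kH_continuousOn (by linarith))
  intro x hx
  rw [interior_Icc] at hx
  rw [(kH_hasDerivAt hx).deriv]
  have hlt : x ^ (α - 1) < (1 - x) ^ (α - 1) :=
    Real.rpow_lt_rpow (le_of_lt hx.1) (by linarith [hx.2]) (by linarith)
  nlinarith

lemma kH_injOn (hα : 0 < α) (hα1 : α ≠ 1) : Set.InjOn (kH α) (Set.Icc 0 (1/2)) := by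
  rcases lt_or_gt_of_ne hα1 with h | h
  · exact (kH_strictMonoOn hα h).injOn
  · exact (kH_strictAntiOn h).injOn

lemma kHInv_kH (hα : 0 < α) (hα1 : α ≠ 1) {a : ℝ} (ha : a ∈ Set.Icc (0:ℝ) (1/2)) :
    kHInv α (kH α a) = a :=
  (kH_injOn hα hα1).leftInvOn_invFunOn ha

lemma kH_mem_IH_half (hα : 0 < α) (hα1 : α ≠ 1) {a : ℝ} (ha : a ∈ Set.Icc (0:ℝ) (1/2)) :
    kH α a ∈ IH α := by
  rw [IH, Set.mem_uIcc]
  have h0 : (0:ℝ) ∈ Set.Icc (0:ℝ) (1/2) := by norm_num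
  have hh : (1/2:ℝ) ∈ Set.Icc (0:ℝ) (1/2) := by norm_num
  rcases lt_or_gt_of_ne hα1 with h | h
  · left
    constructor
    · have := (kH_strictMonoOn hα h).monotoneOn h0 ha ha.1
      rwa [kH_zero hα] at this
    · have := (kH_strictMonoOn hα h).monotoneOn ha hh ha.2
      rwa [kH_half] at this
  · right
    constructor
    · have := (kH_strictAntiOn h).antitoneOn ha hh ha.2
      rwa [kH_half] at this
    · have := (kH_strictAntiOn h).antitoneOn h0 ha ha.1
      rwa [kH_zero hα] at this

lemma kH_mem_IH (hα : 0 < α) (hα1 : α ≠ 1) {a : ℝ} (ha : a ∈ Set.Icc (0:ℝ) 1) :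
    kH α a ∈ IH α := by
  rcases le_or_gt a (1/2) with h | h
  · exact kH_mem_IH_half hα hα1 ⟨ha.1, h⟩
  · rw [← kH_symm]
    exact kH_mem_IH_half hα hα1 ⟨by linarith [ha.2], by linarith⟩

end Aux2
section Aux3

variable {α : ℝ}

lemma chord_weights {d x : ℝ} (hd : d ≠ 1) (hx : x ∈ Set.uIcc 1 d) :
    0 ≤ (x - d)/(1 - d) ∧ 0 ≤ (1 - x)/(1 - d) ∧ (x - d)/(1 - d) + (1 - x)/(1 - d) = 1 := by
  have hne : (1:ℝ) - d ≠ 0 := by intro h; apply hd; linarith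
  rw [Set.mem_uIcc] at hx
  rcases hx with ⟨h1, h2⟩ | ⟨h1, h2⟩
  · have hd1 : 1 < d := lt_of_le_of_ne (h1.trans h2) hd.symm
    exact ⟨div_nonneg_iff.mpr (Or.inr ⟨by linarith, by linarith⟩),
      div_nonneg_iff.mpr (Or.inr ⟨by linarith, by linarith⟩), by field_simp; ring⟩
  · have hd1 : d < 1 := lt_of_le_of_ne (h1.trans h2) hd
    exact ⟨div_nonneg (by linarith) (by linarith),
      div_nonneg (by linarith) (by linarith), by field_simp; ring⟩

lemma convex_chord {d x : ℝ} {f : ℝ → ℝ} (hf : ConvexOn ℝ (Set.uIcc 1 d) f)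
    (hd : d ≠ 1) (hx : x ∈ Set.uIcc 1 d) :
    f x ≤ ((x - d) * f 1 + (1 - x) * f d) / (1 - d) := by
  have hne : (1:ℝ) - d ≠ 0 := by intro h; apply hd; linarith
  obtain ⟨h1, h2, h3⟩ := chord_weights hd hx
  have := hf.2 (Set.left_mem_uIcc (a := 1) (b := d))
    (Set.right_mem_uIcc (a := 1) (b := d)) h1 h2 h3
  simp only [smul_eq_mul] at this
  have hxe : (x - d)/(1 - d) * 1 + (1 - x)/(1 - d) * d = x := by field_simp; ring
  rw [hxe] at this
  calc f x ≤ (x - d)/(1 - d) * f 1 + (1 - x)/(1 - d) * f d := this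
    _ = ((x - d) * f 1 + (1 - x) * f d) / (1 - d) := by ring

lemma concave_chord {d x : ℝ} {f : ℝ → ℝ} (hf : ConcaveOn ℝ (Set.uIcc 1 d) f)
    (hd : d ≠ 1) (hx : x ∈ Set.uIcc 1 d) :
    ((x - d) * f 1 + (1 - x) * f d) / (1 - d) ≤ f x := by
  have hne : (1:ℝ) - d ≠ 0 := by intro h; apply hd; linarith
  obtain ⟨h1, h2, h3⟩ := chord_weights hd hx
  have := hf.2 (Set.left_mem_uIcc (a := 1) (b := d))
    (Set.right_mem_uIcc (a := 1) (b := d)) h1 h2 h3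
  simp only [smul_eq_mul] at this
  have hxe : (x - d)/(1 - d) * 1 + (1 - x)/(1 - d) * d = x := by field_simp; ring
  rw [hxe] at this
  calc ((x - d) * f 1 + (1 - x) * f d) / (1 - d)
      = (x - d)/(1 - d) * f 1 + (1 - x)/(1 - d) * f d := by ring
    _ ≤ f x := this

lemma kkH_at (hα : 0 < α) (hα1 : α ≠ 1) {a b : ℝ} (ha : a ∈ Set.Icc (0:ℝ) (1/2))
    (hb : b ∈ Set.Icc (0:ℝ) (1/2)) :
    kkH α (kH α a) (kH α b) = kH α (bconv a b) := by
  rw [kkH, kHInv_kH hα hα1 ha, kHInv_kH hα hα1 hb]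

lemma kkH_one (hα : 0 < α) (hα1 : α ≠ 1) {b : ℝ} (hb : b ∈ Set.Icc (0:ℝ) (1/2)) :
    kkH α 1 (kH α b) = kH α b := by
  have h0 : (0:ℝ) ∈ Set.Icc (0:ℝ) (1/2) := by norm_num
  rw [show (1:ℝ) = kH α 0 from (kH_zero hα).symm, kkH_at hα hα1 h0 hb]
  congr 1
  simp [bconv]

lemma kkH_delta (hα : 0 < α) (hα1 : α ≠ 1) {b : ℝ} (hb : b ∈ Set.Icc (0:ℝ) (1/2)) :
    kkH α (deltaH α) (kH α b) = deltaH α := by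
  have h0 : (1/2:ℝ) ∈ Set.Icc (0:ℝ) (1/2) := by norm_num
  rw [← kH_half (α := α), kkH_at hα hα1 h0 hb]
  congr 1
  simp [bconv]; ring

end Aux3
section Aux4

variable {α : ℝ}

lemma pointwise_convex_half (hα : 0 < α) (hα1 : α ≠ 1)
    (hc : ∀ y ∈ IH α, ConvexOn ℝ (IH α) (fun x => kkH α x y))
    {a b : ℝ} (ha : a ∈ Set.Icc (0:ℝ) (1/2)) (hb : b ∈ Set.Icc (0:ℝ) (1/2)) :
    kH α (bconv a b) ≤
      ((kH α a - deltaH α) * kH α b + (1 - kH α a) * deltaH α) / (1 - deltaH α) := by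
  have hyI : kH α b ∈ IH α := kH_mem_IH_half hα hα1 hb
  have hxI : kH α a ∈ IH α := kH_mem_IH_half hα hα1 ha
  have hconv := hc (kH α b) hyI
  have := convex_chord (d := deltaH α) (x := kH α a) (f := fun x => kkH α x (kH α b))
    (by rwa [← IH]) (deltaH_ne_one hα1) (by rwa [← IH])
  rwa [kkH_at hα hα1 ha hb, kkH_one hα hα1 hb, kkH_delta hα hα1 hb] at this

lemma pointwise_convex (hα : 0 < α) (hα1 : α ≠ 1)
    (hc : ∀ y ∈ IH α, ConvexOn ℝ (IH α) (fun x => kkH α x y))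
    {a b : ℝ} (ha : a ∈ Set.Icc (0:ℝ) 1) (hb : b ∈ Set.Icc (0:ℝ) 1) :
    kH α (bconv a b) ≤
      ((kH α a - deltaH α) * kH α b + (1 - kH α a) * deltaH α) / (1 - deltaH α) := by
  have key : ∀ a' b' : ℝ, a' ∈ Set.Icc (0:ℝ) (1/2) → b' ∈ Set.Icc (0:ℝ) 1 →
      kH α (bconv a' b') ≤
      ((kH α a' - deltaH α) * kH α b' + (1 - kH α a') * deltaH α) / (1 - deltaH α) := by
    intro a' b' ha' hb'
    rcases le_or_gt b' (1/2) with h | h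
    · exact pointwise_convex_half hα hα1 hc ha' ⟨hb'.1, h⟩
    · have hb2 : 1 - b' ∈ Set.Icc (0:ℝ) (1/2) := ⟨by linarith [hb'.2], by linarith⟩
      have e1 : bconv a' b' = 1 - bconv a' (1 - b') := by simp [bconv]; ring
      rw [e1, kH_symm, ← kH_symm (a := b')]
      exact pointwise_convex_half hα hα1 hc ha' hb2
  rcases le_or_gt a (1/2) with h | h
  · exact key a b ⟨ha.1, h⟩ hb
  · have ha2 : 1 - a ∈ Set.Icc (0:ℝ) (1/2) := ⟨by linarith [ha.2], by linarith⟩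
    have e1 : bconv a b = 1 - bconv (1 - a) b := by simp [bconv]; ring
    rw [e1, kH_symm, ← kH_symm (a := a)]
    exact key (1 - a) b ha2 hb

lemma pointwise_concave_half (hα : 0 < α) (hα1 : α ≠ 1)
    (hc : ∀ y ∈ IH α, ConcaveOn ℝ (IH α) (fun x => kkH α x y))
    {a b : ℝ} (ha : a ∈ Set.Icc (0:ℝ) (1/2)) (hb : b ∈ Set.Icc (0:ℝ) (1/2)) :
    ((kH α a - deltaH α) * kH α b + (1 - kH α a) * deltaH α) / (1 - deltaH α) ≤
      kH α (bconv a b) := by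
  have hyI : kH α b ∈ IH α := kH_mem_IH_half hα hα1 hb
  have hxI : kH α a ∈ IH α := kH_mem_IH_half hα hα1 ha
  have hconv := hc (kH α b) hyI
  have := concave_chord (d := deltaH α) (x := kH α a) (f := fun x => kkH α x (kH α b))
    (by rwa [← IH]) (deltaH_ne_one hα1) (by rwa [← IH])
  rwa [kkH_at hα hα1 ha hb, kkH_one hα hα1 hb, kkH_delta hα hα1 hb] at this

lemma pointwise_concave (hα : 0 < α) (hα1 : α ≠ 1)
    (hc : ∀ y ∈ IH α, ConcaveOn ℝ (IH α) (fun x => kkH α x y))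
    {a b : ℝ} (ha : a ∈ Set.Icc (0:ℝ) 1) (hb : b ∈ Set.Icc (0:ℝ) 1) :
    ((kH α a - deltaH α) * kH α b + (1 - kH α a) * deltaH α) / (1 - deltaH α) ≤
      kH α (bconv a b) := by
  have key : ∀ a' b' : ℝ, a' ∈ Set.Icc (0:ℝ) (1/2) → b' ∈ Set.Icc (0:ℝ) 1 →
      ((kH α a' - deltaH α) * kH α b' + (1 - kH α a') * deltaH α) / (1 - deltaH α) ≤
      kH α (bconv a' b') := by
    intro a' b' ha' hb'
    rcases le_or_gt b' (1/2) with h | h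
    · exact pointwise_concave_half hα hα1 hc ha' ⟨hb'.1, h⟩
    · have hb2 : 1 - b' ∈ Set.Icc (0:ℝ) (1/2) := ⟨by linarith [hb'.2], by linarith⟩
      have e1 : bconv a' b' = 1 - bconv a' (1 - b') := by simp [bconv]; ring
      rw [e1, kH_symm, ← kH_symm (a := b')]
      exact pointwise_concave_half hα hα1 hc ha' hb2
  rcases le_or_gt a (1/2) with h | h
  · exact key a b ⟨ha.1, h⟩ hb
  · have ha2 : 1 - a ∈ Set.Icc (0:ℝ) (1/2) := ⟨by linarith [ha.2], by linarith⟩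
    have e1 : bconv a b = 1 - bconv (1 - a) b := by simp [bconv]; ring
    rw [e1, kH_symm, ← kH_symm (a := a)]
    exact key (1 - a) b ha2 hb

end Aux4
section Aux5

variable {α : ℝ} {Y : Type*} [Fintype Y]

lemma margY_bool (p : Bool → Y → ℝ) (y : Y) : margY p y = p true y + p false y := by
  simp [margY, Fintype.sum_bool]

lemma margY_nonneg {p : Bool → Y → ℝ} (hp : IsPmf p) (y : Y) : 0 ≤ margY p y := by
  rw [margY_bool]
  have := hp.1 true y; have := hp.1 false y; linarith

lemma p_eq_zero_of_margY {p : Bool → Y → ℝ} (hp : IsPmf p) {y : Y}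
    (hq : margY p y = 0) (x : Bool) : p x y = 0 := by
  rw [margY_bool] at hq
  have h1 := hp.1 true y; have h2 := hp.1 false y
  cases x <;> linarith

lemma aY_mem {p : Bool → Y → ℝ} (hp : IsPmf p) (y : Y) :
    p true y / margY p y ∈ Set.Icc (0:ℝ) 1 := by
  rcases eq_or_lt_of_le (margY_nonneg hp y) with hq | hq
  · simp [← hq]
  · constructor
    · exact div_nonneg (hp.1 true y) (le_of_lt hq)
    · rw [div_le_one hq, margY_bool]
      have := hp.1 false y; linarith

lemma sum_margY {p : Bool → Y → ℝ} (hp : IsPmf p) : ∑ y, margY p y = 1 := by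
  rw [← hp.2, Finset.sum_comm]
  rfl

lemma kH_pos (hα : 0 < α) {a : ℝ} (ha : a ∈ Set.Icc (0:ℝ) 1) : 0 < kH α a := by
  rcases eq_or_lt_of_le ha.1 with h | h
  · rw [← h, kH_zero hα]; norm_num
  · have h1 : 0 < a ^ α := Real.rpow_pos_of_pos h α
    have h2 : 0 ≤ (1 - a) ^ α := Real.rpow_nonneg (by linarith [ha.2]) α
    rw [kH]; linarith

/-- Row sum identity. -/
lemma rowsum (hα : 0 < α) {p : Bool → Y → ℝ} (hp : IsPmf p) (y : Y) :
    ∑ x, p x y ^ α = margY p y ^ α * kH α (p true y / margY p y) := by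
  rcases eq_or_lt_of_le (margY_nonneg hp y) with hq | hq
  · rw [← hq]
    simp [Fintype.sum_bool, p_eq_zero_of_margY hp hq.symm, Real.zero_rpow (ne_of_gt hα)]
  · set q := margY p y with hqdef
    set a := p true y / q with hadef
    have ht : p true y = q * a := by rw [hadef]; field_simp
    have hf : p false y = q * (1 - a) := by
      have := margY_bool p y
      rw [← hqdef] at this
      rw [mul_sub, ← ht]; linarith
    have hamem := aY_mem hp y
    rw [← hadef] at hamem
    rw [Fintype.sum_bool, ht, hf,
      Real.mul_rpow (le_of_lt hq) hamem.1,
      Real.mul_rpow (le_of_lt hq) (by linarith [hamem.2]), kH]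
    ring

lemma sum_pow_pos (hα : 0 < α) {p : Bool → Y → ℝ} (hp : IsPmf p) :
    0 < ∑ y, margY p y ^ α := by
  have h1 : ∃ y : Y, 0 < margY p y := by
    by_contra h
    push_neg at h
    have : ∑ y, margY p y = 0 := Finset.sum_eq_zero fun y _ =>
      le_antisymm (h y) (margY_nonneg hp y)
    rw [sum_margY hp] at this; norm_num at this
  obtain ⟨y0, hy0⟩ := h1
  apply Finset.sum_pos' (fun y _ => Real.rpow_nonneg (margY_nonneg hp y) α)
  exact ⟨y0, Finset.mem_univ y0, Real.rpow_pos_of_pos hy0 α⟩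

end Aux5
section Aux6

variable {α : ℝ} {Y1 Y2 : Type*} [Fintype Y1] [Fintype Y2]

lemma bconv_mem {a b : ℝ} (ha : a ∈ Set.Icc (0:ℝ) 1) (hb : b ∈ Set.Icc (0:ℝ) 1) :
    bconv a b ∈ Set.Icc (0:ℝ) 1 := by
  obtain ⟨ha0, ha1⟩ := ha; obtain ⟨hb0, hb1⟩ := hb
  constructor
  · rw [bconv]; nlinarith
  · rw [bconv]; nlinarith

lemma margY_combine (p1 : Bool → Y1 → ℝ) (p2 : Bool → Y2 → ℝ) (y : Y1 × Y2) :
    margY (combine p1 p2) y = margY p1 y.1 * margY p2 y.2 := by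
  simp only [margY, combine, Fintype.sum_bool, Bool.xor_true, Bool.xor_false, Bool.not_true, Bool.not_false]
  ring

lemma combine_isPmf {p1 : Bool → Y1 → ℝ} {p2 : Bool → Y2 → ℝ}
    (hp1 : IsPmf p1) (hp2 : IsPmf p2) : IsPmf (combine p1 p2) := by
  constructor
  · intro x y
    apply Finset.sum_nonneg
    intro z _
    exact mul_nonneg (hp1.1 _ _) (hp2.1 _ _)
  · have : ∀ y : Y1 × Y2, ∑ x, combine p1 p2 x y = margY (combine p1 p2) y := fun _ => rfl
    rw [Finset.sum_comm]
    calc ∑ y : Y1 × Y2, ∑ x, combine p1 p2 x y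
        = ∑ y : Y1 × Y2, margY p1 y.1 * margY p2 y.2 := by
          refine Finset.sum_congr rfl fun y _ => ?_
          rw [this y, margY_combine]
      _ = (∑ y1, margY p1 y1) * (∑ y2, margY p2 y2) := by
          rw [Fintype.sum_prod_type, ← Finset.sum_mul_sum]
      _ = 1 := by rw [sum_margY hp1, sum_margY hp2]; norm_num

lemma combine_rowsum (hα : 0 < α) {p1 : Bool → Y1 → ℝ} {p2 : Bool → Y2 → ℝ}
    (hp1 : IsPmf p1) (hp2 : IsPmf p2) (y : Y1 × Y2) :
    ∑ z, combine p1 p2 z y ^ α =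
      margY p1 y.1 ^ α * margY p2 y.2 ^ α *
        kH α (bconv (p1 true y.1 / margY p1 y.1) (p2 true y.2 / margY p2 y.2)) := by
  obtain ⟨y1, y2⟩ := y
  rcases eq_or_lt_of_le (margY_nonneg hp1 y1) with hq1 | hq1
  · have hz : ∀ z, combine p1 p2 z (y1, y2) = 0 := by
      intro z
      simp [combine, Fintype.sum_bool, p_eq_zero_of_margY hp1 hq1.symm]
    simp [hz, Real.zero_rpow (ne_of_gt hα), ← hq1]
  rcases eq_or_lt_of_le (margY_nonneg hp2 y2) with hq2 | hq2
  · have hz : ∀ z, combine p1 p2 z (y1, y2) = 0 := by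
      intro z
      simp [combine, Fintype.sum_bool, p_eq_zero_of_margY hp2 hq2.symm]
    simp [hz, Real.zero_rpow (ne_of_gt hα), ← hq2]
  · set q1 := margY p1 y1
    set q2 := margY p2 y2
    set a1 := p1 true y1 / q1 with ha1def
    set a2 := p2 true y2 / q2 with ha2def
    have ha1 := aY_mem hp1 y1; rw [← ha1def] at ha1
    have ha2 := aY_mem hp2 y2; rw [← ha2def] at ha2
    have ht1 : p1 true y1 = q1 * a1 := by rw [ha1def]; field_simp
    have hf1 : p1 false y1 = q1 * (1 - a1) := by
      have := margY_bool p1 y1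
      rw [mul_sub, ← ht1]; rw [show margY p1 y1 = q1 from rfl] at this; linarith
    have ht2 : p2 true y2 = q2 * a2 := by rw [ha2def]; field_simp
    have hf2 : p2 false y2 = q2 * (1 - a2) := by
      have := margY_bool p2 y2
      rw [mul_sub, ← ht2]; rw [show margY p2 y2 = q2 from rfl] at this; linarith
    have hbm := bconv_mem ha1 ha2
    have hct : combine p1 p2 true (y1, y2) = q1 * q2 * bconv a1 a2 := by
      simp [combine, Fintype.sum_bool, Bool.xor_true, Bool.xor_false, Bool.not_true, Bool.not_false, ht1, hf1, ht2, hf2, bconv]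
      ring
    have hcf : combine p1 p2 false (y1, y2) = q1 * q2 * (1 - bconv a1 a2) := by
      simp [combine, Fintype.sum_bool, Bool.xor_true, Bool.xor_false, Bool.not_true, Bool.not_false, ht1, hf1, ht2, hf2, bconv]
      ring
    have hq12 : (0:ℝ) ≤ q1 * q2 := mul_nonneg (le_of_lt hq1) (le_of_lt hq2)
    rw [Fintype.sum_bool, hct, hcf,
      Real.mul_rpow hq12 hbm.1, Real.mul_rpow hq12 (by linarith [hbm.2]),
      Real.mul_rpow (le_of_lt hq1) (le_of_lt hq2), kH]
    ring

end Aux6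
section Aux7

set_option linter.unusedSectionVars false

variable {α : ℝ} {Y : Type*} [Fintype Y]

lemma sum_bilinear {Y1 Y2 : Type*} [Fintype Y1] [Fintype Y2]
    (f g : Y1 → ℝ) (u v : Y2 → ℝ) :
    ∑ y1, ∑ y2, (f y1 * u y2 + g y1 * v y2) =
      (∑ y1, f y1) * (∑ y2, u y2) + (∑ y1, g y1) * (∑ y2, v y2) := by
  simp [Finset.sum_add_distrib, ← Finset.mul_sum, ← Finset.sum_mul]

lemma N_pos (hα : 0 < α) {p : Bool → Y → ℝ} (hp : IsPmf p) :
    0 < ∑ y, margY p y ^ α * kH α (p true y / margY p y) := by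
  have h1 : ∃ y : Y, 0 < margY p y := by
    by_contra h
    push_neg at h
    have : ∑ y, margY p y = 0 := Finset.sum_eq_zero fun y _ =>
      le_antisymm (h y) (margY_nonneg hp y)
    rw [sum_margY hp] at this; norm_num at this
  obtain ⟨y0, hy0⟩ := h1
  apply Finset.sum_pos'
  · intro y _
    exact mul_nonneg (Real.rpow_nonneg (margY_nonneg hp y) α)
      (le_of_lt (kH_pos hα (aY_mem hp y)))
  · exact ⟨y0, Finset.mem_univ y0,
      mul_pos (Real.rpow_pos_of_pos hy0 α) (kH_pos hα (aY_mem hp y0))⟩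

lemma KJ_repr (hα : 0 < α) (hα1 : α ≠ 1) {p : Bool → Y → ℝ} (hp : IsPmf p) :
    KJ α p = (∑ y, margY p y ^ α * kH α (p true y / margY p y)) / (∑ y, margY p y ^ α) := by
  have hN : ∑ x, ∑ y, p x y ^ α = ∑ y, margY p y ^ α * kH α (p true y / margY p y) := by
    rw [Finset.sum_comm]
    exact Finset.sum_congr rfl fun y _ => rowsum hα hp y
  have h1α : (1 : ℝ) - α ≠ 0 := by
    intro h; apply hα1; linarith
  rw [KJ, condJ, hN]
  rw [← mul_assoc, mul_one_div, div_self h1α, one_mul, Real.exp_sub,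
    Real.exp_log (N_pos hα hp), Real.exp_log (sum_pow_pos hα hp)]

lemma KJ_mem (hα : 0 < α) (hα1 : α ≠ 1) {p : Bool → Y → ℝ} (hp : IsPmf p) :
    KJ α p ∈ Set.uIcc 1 (deltaH α) := by
  set D := ∑ y, margY p y ^ α with hD
  set N := ∑ y, margY p y ^ α * kH α (p true y / margY p y) with hN
  have hDpos : 0 < D := sum_pow_pos hα hp
  have hlow : (1 ⊓ deltaH α) * D ≤ N := by
    rw [hD, hN, Finset.mul_sum]
    apply Finset.sum_le_sum
    intro y _
    rw [mul_comm]
    apply mul_le_mul_of_nonneg_left _ (Real.rpow_nonneg (margY_nonneg hp y) α)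
    have := kH_mem_IH hα hα1 (aY_mem hp y)
    rw [IH, Set.uIcc, Set.mem_Icc] at this
    exact this.1
  have hhigh : N ≤ (1 ⊔ deltaH α) * D := by
    rw [hD, hN, Finset.mul_sum]
    apply Finset.sum_le_sum
    intro y _
    rw [mul_comm (1 ⊔ deltaH α)]
    apply mul_le_mul_of_nonneg_left _ (Real.rpow_nonneg (margY_nonneg hp y) α)
    have := kH_mem_IH hα hα1 (aY_mem hp y)
    rw [IH, Set.uIcc, Set.mem_Icc] at this
    exact this.2
  rw [KJ_repr hα hα1 hp, ← hD, ← hN, Set.uIcc, Set.mem_Icc]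
  constructor
  · rw [le_div_iff₀ hDpos]; exact hlow
  · rw [div_le_iff₀ hDpos]; exact hhigh

lemma T_pos {δ K1 K2 : ℝ} (hδ : 0 < δ) (hδ1 : δ ≠ 1)
    (h1 : K1 ∈ Set.uIcc 1 δ) (h2 : K2 ∈ Set.uIcc 1 δ) :
    0 < (δ - K1) * (δ - K2) / (1 - δ) + δ := by
  rw [Set.uIcc, Set.mem_Icc] at h1 h2
  have hne : (1:ℝ) - δ ≠ 0 := fun h => hδ1 (by linarith)
  have hr : (δ - K1) * (δ - K2) / (1 - δ) * (1 - δ) = (δ - K1) * (δ - K2) :=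
    div_mul_cancel₀ _ hne
  rcases lt_or_gt_of_ne hδ1 with h | h
  · simp only [min_def, max_def] at h1 h2
    split_ifs at h1 h2 <;>
    · have hnn : 0 ≤ (δ - K1) * (δ - K2) / (1 - δ) :=
        div_nonneg (by nlinarith) (by linarith)
      linarith
  · simp only [min_def, max_def] at h1 h2
    split_ifs at h1 h2 <;> nlinarith [hr]

end Aux7
set_option linter.unusedVariables false

/-- BEC-bound for the Jizba–Arimitsu conditional Rényi entropy,
under convexity/concavity of `κ_α^H`. -/
theorem stmt_12 (α : ℝ) (hα : 0 < α) (hα1 : α ≠ 1)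
    {Y1 Y2 : Type*} [Fintype Y1] [Fintype Y2]
    (p1 : Bool → Y1 → ℝ) (p2 : Bool → Y2 → ℝ)
    (hp1 : IsPmf p1) (hp2 : IsPmf p2) :
    (((∀ y ∈ IH α, ConvexOn ℝ (IH α) (fun x => kkH α x y)) ∧
      (∀ x ∈ IH α, ConvexOn ℝ (IH α) (fun y => kkH α x y))) →
      (1 < α → (1 / (1 - α)) * Real.log
          ((deltaH α - KJ α p1) * (deltaH α - KJ α p2) / (1 - deltaH α) + deltaH α) ≤
          condJ α (combine p1 p2)) ∧
      (α < 1 → condJ α (combine p1 p2) ≤ (1 / (1 - α)) * Real.log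
          ((deltaH α - KJ α p1) * (deltaH α - KJ α p2) / (1 - deltaH α) + deltaH α))) ∧
    (((∀ y ∈ IH α, ConcaveOn ℝ (IH α) (fun x => kkH α x y)) ∧
      (∀ x ∈ IH α, ConcaveOn ℝ (IH α) (fun y => kkH α x y))) →
      (1 < α → condJ α (combine p1 p2) ≤ (1 / (1 - α)) * Real.log
          ((deltaH α - KJ α p1) * (deltaH α - KJ α p2) / (1 - deltaH α) + deltaH α)) ∧
      (α < 1 → (1 / (1 - α)) * Real.log
          ((deltaH α - KJ α p1) * (deltaH α - KJ α p2) / (1 - deltaH α) + deltaH α) ≤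
          condJ α (combine p1 p2))) := by
  have h1α : (1:ℝ) - α ≠ 0 := fun h => hα1 (by linarith)
  set δ := deltaH α with hδdef
  have hδpos : 0 < δ := deltaH_pos
  have hδne : δ ≠ 1 := deltaH_ne_one hα1
  have hδne' : (1:ℝ) - δ ≠ 0 := fun h => hδne (by linarith)
  set D1 := ∑ y, margY p1 y ^ α with hD1def
  set D2 := ∑ y, margY p2 y ^ α with hD2def
  set N1 := ∑ y, margY p1 y ^ α * kH α (p1 true y / margY p1 y) with hN1def
  set N2 := ∑ y, margY p2 y ^ α * kH α (p2 true y / margY p2 y) with hN2def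
  have hD1 : 0 < D1 := sum_pow_pos hα hp1
  have hD2 : 0 < D2 := sum_pow_pos hα hp2
  have hN1p : 0 < N1 := N_pos hα hp1
  have hN2p : 0 < N2 := N_pos hα hp2
  have hK1 : KJ α p1 = N1 / D1 := KJ_repr hα hα1 hp1
  have hK2 : KJ α p2 = N2 / D2 := KJ_repr hα hα1 hp2
  have hpc : IsPmf (combine p1 p2) := combine_isPmf hp1 hp2
  set Nc := ∑ x, ∑ y : Y1 × Y2, combine p1 p2 x y ^ α with hNcdef
  have hNcrow : Nc = ∑ y : Y1 × Y2, margY (combine p1 p2) y ^ α *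
      kH α (combine p1 p2 true y / margY (combine p1 p2) y) := by
    rw [hNcdef, Finset.sum_comm]
    exact Finset.sum_congr rfl fun y _ => rowsum hα hpc y
  have hNcpos : 0 < Nc := hNcrow ▸ N_pos hα hpc
  have hNc2 : Nc = ∑ y1, ∑ y2, margY p1 y1 ^ α * margY p2 y2 ^ α *
      kH α (bconv (p1 true y1 / margY p1 y1) (p2 true y2 / margY p2 y2)) := by
    rw [hNcdef, Finset.sum_comm]
    calc ∑ y : Y1 × Y2, ∑ x, combine p1 p2 x y ^ α
        = ∑ y : Y1 × Y2, margY p1 y.1 ^ α * margY p2 y.2 ^ α *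
            kH α (bconv (p1 true y.1 / margY p1 y.1) (p2 true y.2 / margY p2 y.2)) :=
          Finset.sum_congr rfl fun y _ => combine_rowsum hα hp1 hp2 y
      _ = _ := Fintype.sum_prod_type _
  have hDceq : ∑ y : Y1 × Y2, margY (combine p1 p2) y ^ α = D1 * D2 := by
    calc ∑ y : Y1 × Y2, margY (combine p1 p2) y ^ α
        = ∑ y : Y1 × Y2, margY p1 y.1 ^ α * margY p2 y.2 ^ α := by
          refine Finset.sum_congr rfl fun y _ => ?_
          rw [margY_combine, Real.mul_rpow (margY_nonneg hp1 y.1) (margY_nonneg hp2 y.2)]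
      _ = ∑ y1, ∑ y2, margY p1 y1 ^ α * margY p2 y2 ^ α := Fintype.sum_prod_type _
      _ = D1 * D2 := by
          rw [← Finset.sum_mul_sum, ← hD1def, ← hD2def]
  have hDcpos : 0 < D1 * D2 := mul_pos hD1 hD2
  have hchordsum : ∑ y1, ∑ y2, (margY p1 y1 ^ α * margY p2 y2 ^ α *
      (((kH α (p1 true y1 / margY p1 y1) - δ) * kH α (p2 true y2 / margY p2 y2)
        + (1 - kH α (p1 true y1 / margY p1 y1)) * δ) / (1 - δ)))
      = ((N1 - δ * D1) * N2 + (D1 - N1) * (δ * D2)) / (1 - δ) := by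
    have e1 : ∑ y1, margY p1 y1 ^ α * (kH α (p1 true y1 / margY p1 y1) - δ) / (1 - δ)
        = (N1 - δ * D1) / (1 - δ) := by
      rw [← Finset.sum_div]
      congr 1
      calc ∑ y1, margY p1 y1 ^ α * (kH α (p1 true y1 / margY p1 y1) - δ)
          = ∑ y1, (margY p1 y1 ^ α * kH α (p1 true y1 / margY p1 y1)
              - δ * margY p1 y1 ^ α) := Finset.sum_congr rfl fun y _ => by ring
        _ = N1 - δ * D1 := by
            rw [Finset.sum_sub_distrib, ← hN1def, ← Finset.mul_sum, ← hD1def]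
    have e2 : ∑ y1, margY p1 y1 ^ α * (1 - kH α (p1 true y1 / margY p1 y1)) / (1 - δ)
        = (D1 - N1) / (1 - δ) := by
      rw [← Finset.sum_div]
      congr 1
      calc ∑ y1, margY p1 y1 ^ α * (1 - kH α (p1 true y1 / margY p1 y1))
          = ∑ y1, (margY p1 y1 ^ α
              - margY p1 y1 ^ α * kH α (p1 true y1 / margY p1 y1)) :=
            Finset.sum_congr rfl fun y _ => by ring
        _ = D1 - N1 := by
            rw [Finset.sum_sub_distrib, ← hN1def, ← hD1def]
    have e3 : ∑ y2, margY p2 y2 ^ α * δ = δ * D2 := by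
      rw [← Finset.sum_mul, ← hD2def, mul_comm]
    calc ∑ y1, ∑ y2, (margY p1 y1 ^ α * margY p2 y2 ^ α *
        (((kH α (p1 true y1 / margY p1 y1) - δ) * kH α (p2 true y2 / margY p2 y2)
          + (1 - kH α (p1 true y1 / margY p1 y1)) * δ) / (1 - δ)))
        = ∑ y1, ∑ y2,
            ((margY p1 y1 ^ α * (kH α (p1 true y1 / margY p1 y1) - δ) / (1 - δ)) *
              (margY p2 y2 ^ α * kH α (p2 true y2 / margY p2 y2)) +
            (margY p1 y1 ^ α * (1 - kH α (p1 true y1 / margY p1 y1)) / (1 - δ)) *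
              (margY p2 y2 ^ α * δ)) :=
          Finset.sum_congr rfl fun y1 _ => Finset.sum_congr rfl fun y2 _ => by ring
      _ = (∑ y1, margY p1 y1 ^ α * (kH α (p1 true y1 / margY p1 y1) - δ) / (1 - δ)) *
            (∑ y2, margY p2 y2 ^ α * kH α (p2 true y2 / margY p2 y2)) +
          (∑ y1, margY p1 y1 ^ α * (1 - kH α (p1 true y1 / margY p1 y1)) / (1 - δ)) *
            (∑ y2, margY p2 y2 ^ α * δ) := sum_bilinear _ _ _ _
      _ = ((N1 - δ * D1) * N2 + (D1 - N1) * (δ * D2)) / (1 - δ) := by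
          rw [e1, e2, e3, ← hN2def]
          ring
  set T := (δ - KJ α p1) * (δ - KJ α p2) / (1 - δ) + δ with hTdef
  have hTpos : 0 < T := T_pos hδpos hδne (KJ_mem hα hα1 hp1) (KJ_mem hα hα1 hp2)
  have hTS : T * (D1 * D2) = ((N1 - δ * D1) * N2 + (D1 - N1) * (δ * D2)) / (1 - δ) := by
    rw [hTdef, hK1, hK2]
    field_simp
    ring
  have hcond : condJ α (combine p1 p2) = (1 / (1 - α)) * Real.log (Nc / (D1 * D2)) := by
    rw [condJ, show (∑ x, ∑ y, combine p1 p2 x y ^ α) = Nc from hNcdef.symm, hDceq,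
      ← Real.log_div (ne_of_gt hNcpos) (ne_of_gt hDcpos)]
  constructor
  · rintro ⟨hcx, -⟩
    have hle : Nc ≤ T * (D1 * D2) := by
      rw [hTS, ← hchordsum, hNc2]
      refine Finset.sum_le_sum fun y1 _ => Finset.sum_le_sum fun y2 _ => ?_
      exact mul_le_mul_of_nonneg_left
        (pointwise_convex hα hα1 hcx (aY_mem hp1 y1) (aY_mem hp2 y2))
        (mul_nonneg (Real.rpow_nonneg (margY_nonneg hp1 y1) α)
          (Real.rpow_nonneg (margY_nonneg hp2 y2) α))
    have hdiv : Nc / (D1 * D2) ≤ T := (div_le_iff₀ hDcpos).mpr hle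
    have hlog : Real.log (Nc / (D1 * D2)) ≤ Real.log T :=
      Real.log_le_log (div_pos hNcpos hDcpos) hdiv
    constructor
    · intro hgt
      rw [hcond]
      exact mul_le_mul_of_nonpos_left hlog
        (div_nonpos_of_nonneg_of_nonpos (by norm_num) (by linarith))
    · intro hlt
      rw [hcond]
      exact mul_le_mul_of_nonneg_left hlog
        (div_nonneg (by norm_num) (by linarith))
  · rintro ⟨hcv, -⟩
    have hge : T * (D1 * D2) ≤ Nc := by
      rw [hTS, ← hchordsum, hNc2]
      refine Finset.sum_le_sum fun y1 _ => Finset.sum_le_sum fun y2 _ => ?_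
      exact mul_le_mul_of_nonneg_left
        (pointwise_concave hα hα1 hcv (aY_mem hp1 y1) (aY_mem hp2 y2))
        (mul_nonneg (Real.rpow_nonneg (margY_nonneg hp1 y1) α)
          (Real.rpow_nonneg (margY_nonneg hp2 y2) α))
    have hdiv : T ≤ Nc / (D1 * D2) := (le_div_iff₀ hDcpos).mpr hge
    have hlog : Real.log T ≤ Real.log (Nc / (D1 * D2)) := Real.log_le_log hTpos hdiv
    constructor
    · intro hgt
      rw [hcond]
      exact mul_le_mul_of_nonpos_left hlog
        (div_nonpos_of_nonneg_of_nonpos (by norm_num) (by linarith))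
    · intro hlt
      rw [hcond]
      exact mul_le_mul_of_nonneg_left hlog
        (div_nonneg (by norm_num) (by linarith))
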